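/- Let α > 0 and let f ∈ B₁(α) with logarithmic coefficients γ₁, γ₂ and Taylor coefficients a₂, a₃. Then the stronger estimate |γ₂| − |γ₁| ≤ 1/(α+2) − (α/4)|a₂|² − (1/2)|a₂| holds. -/

import Mathlib

open Complex Metric Set Filter
open scoped Topology

/-- The Bazilevič class `B₁(α)`: `f` is analytic on the unit disk with `f 0 = 0`,
`f' 0 = 1`, and `Re[(f z / z)^(α-1) * f' z] > 0` on the disk, where the power is taken
with the analytic branch equal to `1` at `z = 0`.  The branch is encoded via an analytic
function `h` with `h 0 = 0` and `f z = z * exp (h z)` on the disk (so that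
`h = log (f z / z)` and `(f z / z)^(α-1) = exp ((α-1) * h z)`). -/
def BazilevicB1 (α : ℝ) (f h : ℂ → ℂ) : Prop :=
  AnalyticOnNhd ℂ f (ball 0 1) ∧ AnalyticOnNhd ℂ h (ball 0 1) ∧
  f 0 = 0 ∧ deriv f 0 = 1 ∧ h 0 = 0 ∧
  (∀ z ∈ ball (0 : ℂ) 1, f z = z * Complex.exp (h z)) ∧
  (∀ z ∈ ball (0 : ℂ) 1, 0 < (Complex.exp ((α - 1 : ℂ) * h z) * deriv f z).re)

/-- The first logarithmic coefficient `γ₁`, from `h = log (f z / z) = 2 ∑ γₙ zⁿ`. -/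
noncomputable def logCoeff1 (h : ℂ → ℂ) : ℂ := deriv h 0 / 2

/-- The second logarithmic coefficient `γ₂`, from `h = log (f z / z) = 2 ∑ γₙ zⁿ`. -/
noncomputable def logCoeff2 (h : ℂ → ℂ) : ℂ := iteratedDeriv 2 h 0 / 4

/-- The second Taylor coefficient `a₂` of `f`. -/
noncomputable def coeff2 (f : ℂ → ℂ) : ℂ := iteratedDeriv 2 f 0 / 2

/-- The third Taylor coefficient `a₃` of `f`. -/
noncomputable def coeff3 (f : ℂ → ℂ) : ℂ := iteratedDeriv 3 f 0 / 6




-- helper: |w - a| ≤ |1 - conj a * w| when |w| ≤ 1 and |a| ≤ 1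
lemma moebius_normSq (a w : ℂ) (hw : ‖w‖ ≤ 1) (ha : ‖a‖ ≤ 1) :
    ‖(w - a)‖ ≤ ‖(1 - (starRingEnd ℂ) a * w)‖ := by
  have h1 : Complex.normSq w ≤ 1 := by
    have := Complex.sq_norm w
    nlinarith [norm_nonneg w]
  have h2 : Complex.normSq a ≤ 1 := by
    have := Complex.sq_norm a
    nlinarith [norm_nonneg a]
  have key : Complex.normSq (1 - (starRingEnd ℂ) a * w) - Complex.normSq (w - a)
      = (1 - Complex.normSq a) * (1 - Complex.normSq w) := by
    simp only [Complex.normSq_apply, Complex.sub_re, Complex.sub_im, Complex.mul_re,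
      Complex.mul_im, Complex.one_re, Complex.one_im, Complex.conj_re, Complex.conj_im]
    ring
  have : Complex.normSq (w - a) ≤ Complex.normSq (1 - (starRingEnd ℂ) a * w) := by nlinarith
  have := Real.sqrt_le_sqrt this
  simpa [Complex.norm_def] using this

-- Schwarz–Pick at the origin
lemma schwarz_pick_zero (φ : ℂ → ℂ) (hd : DifferentiableOn ℂ φ (ball 0 1))
    (hb : ∀ z ∈ ball (0:ℂ) 1, ‖(φ z)‖ ≤ 1) :
    ‖(deriv φ 0)‖ ≤ 1 - (‖(φ 0)‖)^2 := by
  have h0mem : (0:ℂ) ∈ ball (0:ℂ) 1 := by simp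
  have ha1 : ‖(φ 0)‖ ≤ 1 := hb 0 h0mem
  rcases eq_or_lt_of_le ha1 with heq | hlt
  · -- |φ 0| = 1 : local max of norm, φ locally constant
    have hmax : IsLocalMax (norm ∘ φ) 0 := by
      filter_upwards [isOpen_ball.mem_nhds h0mem] with z hz
      simpa [heq] using hb z hz
    have hdiff : ∀ᶠ z in 𝓝 (0:ℂ), DifferentiableAt ℂ φ z := by
      filter_upwards [isOpen_ball.mem_nhds h0mem] with z hz
      exact (hd z hz).differentiableAt (isOpen_ball.mem_nhds hz)
    have hconst := Complex.eventually_eq_of_isLocalMax_norm hdiff hmax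
    have hd0 : deriv φ 0 = deriv (fun _ : ℂ => φ 0) 0 := Filter.EventuallyEq.deriv_eq hconst
    rw [hd0, deriv_const]
    simp only [norm_zero]
    nlinarith [heq]
  · -- |φ 0| < 1
    set a := φ 0 with ha
    have hden : ∀ z ∈ ball (0:ℂ) 1, (1 - (starRingEnd ℂ) a * φ z) ≠ 0 := by
      intro z hz h0
      have : ‖((starRingEnd ℂ) a * φ z)‖ < 1 := by
        rw [norm_mul]
        calc ‖((starRingEnd ℂ) a)‖ * ‖(φ z)‖
            ≤ ‖a‖ * 1 := by
              rw [Complex.norm_conj]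
              exact mul_le_mul_of_nonneg_left (hb z hz) (norm_nonneg a)
          _ < 1 := by simpa using hlt
      have h1 : (1 : ℂ) = (starRingEnd ℂ) a * φ z := by linear_combination h0
      rw [← h1] at this
      simp at this
    set ψ : ℂ → ℂ := fun z => (φ z - a) / (1 - (starRingEnd ℂ) a * φ z) with hψ
    have hψd : DifferentiableOn ℂ ψ (ball 0 1) := by
      apply DifferentiableOn.div
      · exact hd.sub (differentiableOn_const a)
      · exact (differentiableOn_const (1:ℂ)).sub ((differentiableOn_const _).mul hd)
      · exact hden
    have hψ0 : ψ 0 = 0 := by simp [hψ, ← ha]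
    have hψb : ∀ z ∈ ball (0:ℂ) 1, ‖(ψ z)‖ ≤ 1 := by
      intro z hz
      rw [hψ, norm_div]
      rcases eq_or_ne (1 - (starRingEnd ℂ) a * φ z) 0 with h0 | h0
      · exact absurd h0 (hden z hz)
      · rw [div_le_one (norm_pos_iff.mpr h0)]
        · exact moebius_normSq a (φ z) (hb z hz) ha1
    -- Schwarz lemma with radius 1 + ε
    have hψder : ‖(deriv ψ 0)‖ ≤ 1 := by
      refine le_of_forall_gt_imp_ge_of_dense fun c hc => ?_
      have hmaps : MapsTo ψ (ball (0:ℂ) 1) (closedBall (ψ 0) c) := by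
        intro z hz
        rw [hψ0, mem_closedBall_zero_iff]
        exact le_trans (hψb z hz) hc.le
      have := Complex.norm_deriv_le_div_of_mapsTo_ball hψd hmaps one_pos
      simpa using this
    -- compute deriv ψ 0
    have hφat : HasDerivAt φ (deriv φ 0) 0 :=
      ((hd 0 h0mem).differentiableAt (isOpen_ball.mem_nhds h0mem)).hasDerivAt
    have hD0 : (1 - (starRingEnd ℂ) a * a) ≠ 0 := by
      have := hden 0 h0mem; rwa [← ha] at this
    have hNum : HasDerivAt (fun z => φ z - a) (deriv φ 0) 0 := hφat.sub_const a
    have hDen : HasDerivAt (fun z => 1 - (starRingEnd ℂ) a * φ z)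
        (-((starRingEnd ℂ) a * deriv φ 0)) 0 := by
      simpa using ((hφat.const_mul ((starRingEnd ℂ) a)).const_sub 1)
    have hψat : HasDerivAt ψ
        ((deriv φ 0 * (1 - (starRingEnd ℂ) a * a) - (a - a) * (-((starRingEnd ℂ) a * deriv φ 0)))
          / (1 - (starRingEnd ℂ) a * a)^2) 0 := by
      have : HasDerivAt (fun z => (φ z - a) / (1 - (starRingEnd ℂ) a * φ z)) _ 0 := hNum.div hDen hD0
      simpa [← ha] using this
    have hψderiv0 : deriv ψ 0 = deriv φ 0 / (1 - (starRingEnd ℂ) a * a) := by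
      rw [hψat.deriv]
      field_simp
      ring
    -- conclude
    have hconj : (1 - (starRingEnd ℂ) a * a) = ((1 - (‖a‖)^2 : ℝ) : ℂ) := by
      rw [Complex.sq_norm]
      simp [Complex.normSq_eq_conj_mul_self]
    have habs : ‖(1 - (starRingEnd ℂ) a * a)‖ = 1 - (‖a‖)^2 := by
      rw [hconj, Complex.norm_real, Real.norm_eq_abs, _root_.abs_of_nonneg]
      nlinarith [norm_nonneg a]
    rw [hψderiv0, norm_div, habs] at hψder
    have hpos : (0:ℝ) < 1 - (‖a‖)^2 := by nlinarith [norm_nonneg a]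
    calc ‖(deriv φ 0)‖ = (‖(deriv φ 0)‖ / (1 - (‖a‖)^2)) * (1 - (‖a‖)^2) := by
          field_simp
      _ ≤ 1 * (1 - (‖a‖)^2) := by
          exact mul_le_mul_of_nonneg_right hψder hpos.le
      _ = 1 - (‖(φ 0)‖)^2 := by rw [one_mul, ← ha]



lemma omega_bound (ω : ℂ → ℂ) (hd : DifferentiableOn ℂ ω (ball 0 1)) (h0 : ω 0 = 0)
    (hb : ∀ z ∈ ball (0:ℂ) 1, ‖(ω z)‖ ≤ 1) :
    ‖(iteratedDeriv 2 ω 0)‖ ≤ 2 * (1 - (‖(deriv ω 0)‖)^2) := by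
  have h0mem : (0:ℂ) ∈ ball (0:ℂ) 1 := by simp
  set φ : ℂ → ℂ := dslope ω 0 with hφdef
  have hφd : DifferentiableOn ℂ φ (ball 0 1) :=
    (differentiableOn_dslope (ball_mem_nhds 0 one_pos)).mpr hd
  have hφb : ∀ z ∈ ball (0:ℂ) 1, ‖(φ z)‖ ≤ 1 := by
    intro z hz
    refine le_of_forall_gt_imp_ge_of_dense fun c hc => ?_
    have hmaps : MapsTo ω (ball (0:ℂ) 1) (closedBall (ω 0) c) := by
      intro w hw
      rw [h0, mem_closedBall_zero_iff]
      exact le_trans (hb w hw) hc.le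
    have := Complex.norm_dslope_le_div_of_mapsTo_ball hd hmaps hz
    simpa using this
  have key := schwarz_pick_zero φ hφd hφb
  have hφ0 : φ 0 = deriv ω 0 := dslope_same ω 0
  -- identity ω z = z * φ z
  have hωeq : ω = fun z => z * φ z := by
    funext z
    have := sub_smul_dslope ω 0 z
    rw [h0] at this
    simpa [smul_eq_mul] using this.symm
  have hφa : AnalyticOnNhd ℂ φ (ball 0 1) := hφd.analyticOnNhd isOpen_ball
  have hderiv : ∀ z ∈ ball (0:ℂ) 1, deriv ω z = φ z + z * deriv φ z := by
    intro z hz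
    have hφz : HasDerivAt φ (deriv φ z) z :=
      ((hφa z hz).differentiableAt).hasDerivAt
    have : HasDerivAt (fun y => y * φ y) (1 * φ z + z * deriv φ z) z :=
      (hasDerivAt_id z).mul hφz
    rw [hωeq]
    rw [this.deriv]
    ring
  have hev : deriv ω =ᶠ[𝓝 (0:ℂ)] fun z => φ z + z * deriv φ z := by
    filter_upwards [isOpen_ball.mem_nhds h0mem] with z hz using hderiv z hz
  have h2 : iteratedDeriv 2 ω 0 = 2 * deriv φ 0 := by
    rw [show (2:ℕ) = 1 + 1 from rfl, iteratedDeriv_succ, iteratedDeriv_one]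
    rw [hev.deriv_eq]
    have hφ0' : HasDerivAt φ (deriv φ 0) 0 := ((hφa 0 h0mem).differentiableAt).hasDerivAt
    have hdφ0 : HasDerivAt (deriv φ) (deriv (deriv φ) 0) 0 :=
      ((hφa.deriv 0 h0mem).differentiableAt).hasDerivAt
    have : HasDerivAt (fun z => φ z + z * deriv φ z)
        (deriv φ 0 + (1 * deriv φ 0 + 0 * deriv (deriv φ) 0)) 0 :=
      hφ0'.add ((hasDerivAt_id 0).mul hdφ0)
    rw [this.deriv]
    ring
  rw [h2, norm_mul]
  have : ‖(2:ℂ)‖ = 2 := by simp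
  rw [this]
  rw [← hφ0]
  nlinarith [key, norm_nonneg (deriv φ 0)]


noncomputable def Qfun (h : ℂ → ℂ) (β : ℂ) (z : ℂ) : ℂ :=
  Complex.exp (β * h z) * (1 + z * deriv h z)

noncomputable def Rfun (h : ℂ → ℂ) (β : ℂ) (z : ℂ) : ℂ :=
  Complex.exp (β * h z) *
    (β * deriv h z * (1 + z * deriv h z) + (deriv h z + z * deriv (deriv h) z))

lemma Qfun_hasDeriv (h : ℂ → ℂ) (hha : AnalyticOnNhd ℂ h (ball 0 1)) (β : ℂ)
    {z : ℂ} (hz : z ∈ ball (0:ℂ) 1) : HasDerivAt (Qfun h β) (Rfun h β z) z := by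
  have hh' : HasDerivAt h (deriv h z) z := ((hha z hz).differentiableAt).hasDerivAt
  have hdh' : HasDerivAt (deriv h) (deriv (deriv h) z) z :=
    ((hha.deriv z hz).differentiableAt).hasDerivAt
  have hE : HasDerivAt (fun w => Complex.exp (β * h w))
      (Complex.exp (β * h z) * (β * deriv h z)) z := (hh'.const_mul β).cexp
  have hu : HasDerivAt (fun w => 1 + w * deriv h w)
      (1 * deriv h z + z * deriv (deriv h) z) z := ((hasDerivAt_id z).mul hdh').const_add 1
  have := hE.mul hu
  refine this.congr_deriv ?_
  unfold Rfun
  ring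

lemma Rfun_hasDeriv_zero (h : ℂ → ℂ) (hha : AnalyticOnNhd ℂ h (ball 0 1))
    (hh0 : h 0 = 0) (β : ℂ) :
    HasDerivAt (Rfun h β)
      ((β + 2) * deriv (deriv h) 0 + β * (β + 2) * (deriv h 0)^2) 0 := by
  have h0mem : (0:ℂ) ∈ ball (0:ℂ) 1 := by simp
  have hh' : HasDerivAt h (deriv h 0) 0 := ((hha 0 h0mem).differentiableAt).hasDerivAt
  have hdh' : HasDerivAt (deriv h) (deriv (deriv h) 0) 0 :=
    ((hha.deriv 0 h0mem).differentiableAt).hasDerivAt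
  have hd2h' : HasDerivAt (deriv (deriv h)) (deriv (deriv (deriv h)) 0) 0 :=
    ((hha.deriv.deriv 0 h0mem).differentiableAt).hasDerivAt
  have hE : HasDerivAt (fun w => Complex.exp (β * h w))
      (Complex.exp (β * h 0) * (β * deriv h 0)) 0 := (hh'.const_mul β).cexp
  have hu : HasDerivAt (fun w => 1 + w * deriv h w)
      (1 * deriv h 0 + 0 * deriv (deriv h) 0) 0 := ((hasDerivAt_id 0).mul hdh').const_add 1
  have ht1 : HasDerivAt (fun w => β * deriv h w * (1 + w * deriv h w))
      ((β * deriv (deriv h) 0) * (1 + 0 * deriv h 0)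
        + (β * deriv h 0) * (1 * deriv h 0 + 0 * deriv (deriv h) 0)) 0 :=
    (hdh'.const_mul β).mul hu
  have ht2 : HasDerivAt (fun w => deriv h w + w * deriv (deriv h) w)
      (deriv (deriv h) 0 + (1 * deriv (deriv h) 0 + 0 * deriv (deriv (deriv h)) 0)) 0 :=
    hdh'.add ((hasDerivAt_id 0).mul hd2h')
  have hG := ht1.add ht2
  have := hE.mul hG
  refine this.congr_deriv ?_
  simp only [hh0, mul_zero, Complex.exp_zero, Pi.add_apply]
  ring

lemma Rfun_zero (h : ℂ → ℂ) (hh0 : h 0 = 0) (β : ℂ) :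
    Rfun h β 0 = (β + 1) * deriv h 0 := by
  unfold Rfun
  simp [hh0]
  ring


/-- For `α > 0` and `f ∈ B₁(α)` the stronger estimate
`|γ₂| - |γ₁| ≤ 1/(α+2) - (α/4)|a₂|² - (1/2)|a₂|` holds. -/
theorem stmt_8 (α : ℝ) (hα : 0 < α) (f h : ℂ → ℂ) (hf : BazilevicB1 α f h) :
    ‖(logCoeff2 h)‖ - ‖(logCoeff1 h)‖ ≤
      1 / (α + 2) - (α / 4) * (‖(coeff2 f)‖) ^ 2
        - (1 / 2) * ‖(coeff2 f)‖ := by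
  obtain ⟨hfa, hha, hf0, hf'0, hh0, hfeq, hre⟩ := hf
  have h0mem : (0:ℂ) ∈ ball (0:ℂ) 1 := by simp
  set A : ℂ := deriv h 0 with hA
  set B : ℂ := deriv (deriv h) 0 with hBdef
  have hB : iteratedDeriv 2 h 0 = B := by
    rw [show (2:ℕ) = 1 + 1 from rfl, iteratedDeriv_succ, iteratedDeriv_one]
  -- deriv f = Qfun h 1 on the ball
  have hQf : ∀ z ∈ ball (0:ℂ) 1, deriv f z = Qfun h 1 z := by
    intro z hz
    have hev : f =ᶠ[𝓝 z] fun w => w * Complex.exp (h w) := by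
      filter_upwards [isOpen_ball.mem_nhds hz] with w hw using hfeq w hw
    have hh' : HasDerivAt h (deriv h z) z := ((hha z hz).differentiableAt).hasDerivAt
    have hder : HasDerivAt (fun w => w * Complex.exp (h w))
        (1 * Complex.exp (h z) + z * (Complex.exp (h z) * deriv h z)) z :=
      (hasDerivAt_id z).mul hh'.cexp
    rw [hev.deriv_eq, hder.deriv]
    unfold Qfun
    rw [one_mul]
    ring
  -- q := Qfun h α has positive real part on the ball
  have hreQ : ∀ z ∈ ball (0:ℂ) 1, 0 < (Qfun h (α:ℂ) z).re := by
    intro z hz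
    have := hre z hz
    rw [hQf z hz] at this
    have heq : Complex.exp ((α - 1 : ℂ) * h z) * Qfun h 1 z = Qfun h (α:ℂ) z := by
      unfold Qfun
      rw [← mul_assoc, ← Complex.exp_add]
      ring_nf
    rwa [heq] at this
  set q : ℂ → ℂ := Qfun h (α:ℂ) with hq
  have hq0 : q 0 = 1 := by unfold q; unfold Qfun; simp [hh0]
  have hqd : ∀ z ∈ ball (0:ℂ) 1, HasDerivAt q (Rfun h (α:ℂ) z) z :=
    fun z hz => Qfun_hasDeriv h hha (α:ℂ) hz
  have hden : ∀ z ∈ ball (0:ℂ) 1, q z + 1 ≠ 0 := by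
    intro z hz h0
    have hpos := hreQ z hz
    have : q z = -1 := by linear_combination h0
    rw [this] at hpos
    norm_num at hpos
  -- ω
  set ω : ℂ → ℂ := fun z => (q z - 1) / (q z + 1) with hω
  have hω0 : ω 0 = 0 := by simp [hω, hq0]
  have hqdiff : DifferentiableOn ℂ q (ball 0 1) :=
    fun z hz => ((hqd z hz).differentiableAt).differentiableWithinAt
  have hωd : DifferentiableOn ℂ ω (ball 0 1) :=
    (hqdiff.sub_const 1).div (hqdiff.add_const 1) hden
  have hωb : ∀ z ∈ ball (0:ℂ) 1, ‖(ω z)‖ ≤ 1 := by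
    intro z hz
    have hkey : Complex.normSq (q z + 1) - Complex.normSq (q z - 1) = 4 * (q z).re := by
      simp only [Complex.normSq_apply, Complex.add_re, Complex.add_im, Complex.sub_re,
        Complex.sub_im, Complex.one_re, Complex.one_im]
      ring
    have h4 : Complex.normSq (q z - 1) ≤ Complex.normSq (q z + 1) := by
      have := hreQ z hz; linarith
    have habs : ‖(q z - 1)‖ ≤ ‖(q z + 1)‖ := by
      have := Real.sqrt_le_sqrt h4
      simpa [Complex.norm_def] using this
    rw [hω]
    simp only [norm_div]
    rw [div_le_one (norm_pos_iff.mpr (hden z hz))]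
    exact habs
  have hbound := omega_bound ω hωd hω0 hωb
  -- deriv ω on ball
  have hωder : ∀ z ∈ ball (0:ℂ) 1, deriv ω z = 2 * Rfun h (α:ℂ) z / (q z + 1)^2 := by
    intro z hz
    have hnum : HasDerivAt (fun w => q w - 1) (Rfun h (α:ℂ) z) z := (hqd z hz).sub_const 1
    have hd2 : HasDerivAt (fun w => q w + 1) (Rfun h (α:ℂ) z) z := (hqd z hz).add_const 1
    have hdiv : HasDerivAt (fun w => (q w - 1) / (q w + 1)) _ z := hnum.div hd2 (hden z hz)
    rw [hω, hdiv.deriv]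
    congr 1
    ring
  have hω'0 : deriv ω 0 = ((α:ℂ) + 1) * A / 2 := by
    rw [hωder 0 h0mem, hq0, Rfun_zero h hh0]
    ring
  -- second derivative of ω at 0
  set C : ℂ := ((α:ℂ) + 2) * B + (α:ℂ) * ((α:ℂ) + 2) * A^2 with hC
  have hW2 : iteratedDeriv 2 ω 0 = C / 2 - ((α:ℂ) + 1)^2 * A^2 / 2 := by
    rw [show (2:ℕ) = 1 + 1 from rfl, iteratedDeriv_succ, iteratedDeriv_one]
    have hev : deriv ω =ᶠ[𝓝 (0:ℂ)] fun z => 2 * Rfun h (α:ℂ) z / (q z + 1)^2 := by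
      filter_upwards [isOpen_ball.mem_nhds h0mem] with z hz using hωder z hz
    rw [hev.deriv_eq]
    have hnum : HasDerivAt (fun z => 2 * Rfun h (α:ℂ) z) (2 * C) 0 := by
      have := (Rfun_hasDeriv_zero h hha hh0 (α:ℂ)).const_mul 2
      rwa [← hC] at this
    have hd2 : HasDerivAt (fun z => (q z + 1)^2)
        ((2:ℕ) * (q 0 + 1)^(2-1) * Rfun h (α:ℂ) 0) 0 := ((hqd 0 h0mem).add_const 1).pow 2
    have hD0 : (q 0 + 1)^2 ≠ 0 := pow_ne_zero 2 (hden 0 h0mem)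
    have hdiv : HasDerivAt (fun z => 2 * Rfun h (α:ℂ) z / (q z + 1)^2) _ 0 := hnum.div hd2 hD0
    rw [hdiv.deriv, hq0, Rfun_zero h hh0]
    have h2 : ((1:ℂ) + 1) ≠ 0 := by norm_num
    field_simp
    ring
  -- assemble the main complex inequality
  rw [hW2, hω'0] at hbound
  have hCs : C / 2 - ((α:ℂ) + 1)^2 * A^2 / 2 = (((α:ℂ) + 2) * B - A^2) / 2 := by
    rw [hC]; ring
  rw [hCs] at hbound
  have habs2 : ‖((((α:ℂ) + 2) * B - A^2) / 2)‖
      = ‖(((α:ℂ) + 2) * B - A^2)‖ / 2 := by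
    rw [norm_div]; simp
  have habs1 : ‖(((α:ℂ) + 1) * A / 2)‖ = (α + 1) * ‖A‖ / 2 := by
    rw [norm_div, norm_mul]
    have : ((α:ℂ) + 1) = ((α + 1 : ℝ) : ℂ) := by push_cast; ring
    rw [this, Complex.norm_real, Real.norm_eq_abs, _root_.abs_of_pos (by linarith)]
    simp
  rw [habs2, habs1] at hbound
  -- triangle inequality
  have htri : ‖(((α:ℂ) + 2) * B)‖ ≤
      ‖(((α:ℂ) + 2) * B - A^2)‖ + ‖(A^2)‖ := by
    calc ‖(((α:ℂ) + 2) * B)‖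
        = ‖((((α:ℂ) + 2) * B - A^2) + A^2)‖ := by ring_nf
      _ ≤ _ := norm_add_le _ _
  have habsB : ‖(((α:ℂ) + 2) * B)‖ = (α + 2) * ‖B‖ := by
    rw [norm_mul]
    have : ((α:ℂ) + 2) = ((α + 2 : ℝ) : ℂ) := by push_cast; ring
    rw [this, Complex.norm_real, Real.norm_eq_abs, _root_.abs_of_pos (by linarith)]
  have habsA2 : ‖(A^2)‖ = (‖A‖)^2 := by rw [norm_pow]
  rw [habsB, habsA2] at htri
  -- coefficients
  have hcoeff2 : coeff2 f = A := by
    have hev : deriv f =ᶠ[𝓝 (0:ℂ)] Qfun h 1 := by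
      filter_upwards [isOpen_ball.mem_nhds h0mem] with z hz using hQf z hz
    have : iteratedDeriv 2 f 0 = deriv (Qfun h 1) 0 := by
      rw [show (2:ℕ) = 1 + 1 from rfl, iteratedDeriv_succ, iteratedDeriv_one, hev.deriv_eq]
    rw [coeff2, this, (Qfun_hasDeriv h hha 1 h0mem).deriv, Rfun_zero h hh0]
    ring
  have hlog1 : logCoeff1 h = A / 2 := rfl
  have hlog2 : logCoeff2 h = B / 4 := by rw [logCoeff2, hB]
  rw [hcoeff2, hlog1, hlog2]
  have habsB4 : ‖(B / 4)‖ = ‖B‖ / 4 := by rw [norm_div]; simp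
  have habsA2' : ‖(A / 2)‖ = ‖A‖ / 2 := by rw [norm_div]; simp
  rw [habsB4, habsA2']
  -- final real arithmetic
  set x : ℝ := ‖A‖ with hx
  set b : ℝ := ‖B‖ with hb
  have hxnn : 0 ≤ x := norm_nonneg A
  have hbnn : 0 ≤ b := norm_nonneg B
  have hmain : (α + 2) * b ≤ 4 - (α + 1)^2 * x^2 + x^2 := by
    have h1 : ‖(((α:ℂ) + 2) * B - A^2)‖ / 2 ≤ 2 * (1 - ((α + 1) * x / 2)^2) := hbound
    nlinarith [htri, h1]
  have hα2 : (0:ℝ) < α + 2 := by linarith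
  have hinv : (α + 2) * (1 / (α + 2)) = 1 := by field_simp
  nlinarith [hmain, hinv, hα2, mul_pos hα2 hα2]
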